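/- For every real ε > 0 and every integer n ≥ 1 there is a single-player instance — U = [n], the additive valuation with v({e}) = γ^{n−e} for all e ∈ [n] where γ = 1 + n/ε, budget B = 1, and admissible cost class D = ℝ≥0^n of all additive cost vectors — such that every randomized mechanism M on this instance that is truthful in expectation, individually rational with probability 1, and budget-feasible in expectation admits a cost vector c ∈ D with E_{(S,ρ)∼M(c)}[v(S)] ≤ OPTalg(v,B,c)·(1+ε)/n. -/

import Mathlib

open Finset

/-- The algorithmic optimum `OPTalg(v,B,c)`. -/
noncomputable def OPTalg {n : ℕ} (v c : Fin n → ℝ) (B : ℝ) : ℝ :=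
  sSup {x : ℝ | ∃ S : Finset (Fin n), (∑ e ∈ S, c e) ≤ B ∧ x = ∑ e ∈ S, v e}

/-- Expectation of `g` under a finitely-supported distribution `μ` on outcomes
`(S, ρ)` (procured set, payment). -/
noncomputable def fexp {n : ℕ} (μ : (Finset (Fin n) × ℝ) →₀ ℝ)
    (g : Finset (Fin n) × ℝ → ℝ) : ℝ :=
  μ.sum fun x w => w * g x

lemma fexp_util {n : ℕ} (μ : (Finset (Fin n) × ℝ) →₀ ℝ) (d : Fin n → ℝ) :
    fexp μ (fun x => x.2 - ∑ e ∈ x.1, d e)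
      = fexp μ (fun x => x.2) - fexp μ (fun x => ∑ e ∈ x.1, d e) := by
  simp [fexp, Finsupp.sum, mul_sub, Finset.sum_sub_distrib]

lemma fexp_mul_sum {n : ℕ} (μ : (Finset (Fin n) × ℝ) →₀ ℝ) (a : ℝ) (d : Fin n → ℝ) :
    fexp μ (fun x => ∑ e ∈ x.1, a * d e) = a * fexp μ (fun x => ∑ e ∈ x.1, d e) := by
  unfold fexp Finsupp.sum
  rw [Finset.mul_sum]
  refine Finset.sum_congr rfl fun x _ => ?_
  show μ x * (∑ e ∈ x.1, a * d e) = a * (μ x * ∑ e ∈ x.1, d e)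
  rw [← Finset.mul_sum]; ring

lemma fexp_mono {n : ℕ} (μ : (Finset (Fin n) × ℝ) →₀ ℝ) (g h : Finset (Fin n) × ℝ → ℝ)
    (hw : ∀ x, 0 ≤ μ x) (hgh : ∀ x ∈ μ.support, g x ≤ h x) : fexp μ g ≤ fexp μ h :=
  Finset.sum_le_sum fun x hx => mul_le_mul_of_nonneg_left (hgh x hx) (hw x)

set_option maxHeartbeats 800000 in
lemma chain_lemma (ε : ℝ) (hε : 0 < ε) (n : ℕ) (hn : 1 ≤ n) (γ : ℝ)
    (hγ : γ = 1 + n / ε) (t p : ℕ → ℝ)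
    (htp : ∀ j, j < n → t j ≤ p j) (hp1 : ∀ j, j < n → p j ≤ 1)
    (hstep : ∀ j, j + 1 < n → p (j+1) - γ⁻¹ * t (j+1) ≤ p j - t j) :
    ∃ j, j < n ∧ t j ≤ (1 + ε) / n := by
  by_contra hcon
  push_neg at hcon
  have hn1 : (1:ℝ) ≤ n := by exact_mod_cast hn
  have hnpos : (0:ℝ) < n := by linarith
  have hγ1 : 1 < γ := by
    have : 0 < (n:ℝ) / ε := div_pos hnpos hε
    rw [hγ]; linarith
  have hγpos : 0 < γ := by linarith
  have hγinvpos : 0 < γ⁻¹ := inv_pos.mpr hγpos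
  have hγinvlt : γ⁻¹ < 1 := by
    rw [inv_lt_one_iff₀]; right; exact hγ1
  set τ : ℝ := (1 + ε) / n with hτdef
  have hτpos : 0 < τ := div_pos (by linarith) hnpos
  set β : ℝ := 1 - γ⁻¹ with hβdef
  have hβpos : 0 < β := by simp [hβdef]; linarith
  have ind : ∀ j, j < n → p j - γ⁻¹ * t j ≤ p 0 - γ⁻¹ * t 0 - j * (τ * β) := by
    intro j
    induction j with
    | zero => intro h; simp
    | succ j ih =>
      intro hj
      have hj' : j < n := by omega
      have h1 := hstep j hj
      have h2 := hcon j hj'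
      have h3 : β * τ ≤ β * t j := mul_le_mul_of_nonneg_left h2.le hβpos.le
      have h4 := ih hj'
      have hcast : ((j+1 : ℕ) : ℝ) = (j : ℝ) + 1 := by push_cast; ring
      rw [hcast]
      have : p j - t j = (p j - γ⁻¹ * t j) - β * t j := by rw [hβdef]; ring
      nlinarith
  have hlastlt : n - 1 < n := by omega
  have hL := ind (n-1) hlastlt
  have hcast : ((n - 1 : ℕ) : ℝ) = (n : ℝ) - 1 := by
    push_cast [hn]; ring
  rw [hcast] at hL
  have ht0 := hcon 0 (by omega)
  have htl := hcon (n-1) hlastlt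
  have htpl := htp (n-1) hlastlt
  have hp0 := hp1 0 (by omega)
  have hA : β * τ < p (n-1) - γ⁻¹ * t (n-1) := by
    have h1 : β * τ < β * t (n-1) := mul_lt_mul_of_pos_left htl hβpos
    have h2 : β * t (n-1) ≤ p (n-1) - γ⁻¹ * t (n-1) := by
      rw [hβdef]; nlinarith
    exact lt_of_lt_of_le h1 h2
  have hB : p 0 - γ⁻¹ * t 0 < 1 - γ⁻¹ * τ := by
    have : γ⁻¹ * τ < γ⁻¹ * t 0 := mul_lt_mul_of_pos_left ht0 hγinvpos
    linarith
  have hkey : τ * (γ⁻¹ + n * β) < 1 := by nlinarith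
  have hγinv : γ⁻¹ = ε / (ε + n) := by
    rw [hγ]
    have : 1 + (n:ℝ)/ε = (ε + n)/ε := by field_simp
    rw [this, inv_div]
  rw [hγinv, hβdef, hγinv, hτdef] at hkey
  have hεn : (0:ℝ) < ε + n := by linarith
  have hnn : (0:ℝ) ≤ (n:ℝ)*n - n := by nlinarith
  rw [div_mul_eq_mul_div, div_lt_one hnpos] at hkey
  have hexp : (1+ε) * (ε/(ε+n) + n * (1 - ε/(ε+n))) = (1+ε) * (ε + n*n) / (ε+n) := by
    field_simp
    ring
  rw [hexp, div_lt_iff₀ hεn] at hkey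
  nlinarith [mul_nonneg hε.le hnn, sq_nonneg ε]

/-- For every `ε > 0` and every `n ≥ 1` there is a single-player
instance — `U = [n]`, the additive valuation `v e = γ^(n-e)` with `γ = 1 + n/ε`,
budget `B = 1`, admissible class all nonnegative additive cost vectors — such that
every randomized mechanism that is truthful in expectation, individually rational with
probability 1, and budget-feasible in expectation admits a cost vector `c` with
expected value at most `OPTalg(v,B,c) · (1+ε)/n`. -/
theorem stmt1 (ε : ℝ) (hε : 0 < ε) (n : ℕ) (hn : 1 ≤ n) :
    ∃ (γ : ℝ) (v : Fin n → ℝ) (B : ℝ),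
      γ = 1 + n / ε ∧ (∀ e : Fin n, v e = γ ^ (n - 1 - (e : ℕ))) ∧ B = 1 ∧
      ∀ M : (Fin n → ℝ) → ((Finset (Fin n) × ℝ) →₀ ℝ),
        -- each `M c` is a (finitely supported) probability distribution
        (∀ c : Fin n → ℝ, (∀ e, 0 ≤ c e) →
          (∀ x, 0 ≤ M c x) ∧ (M c).sum (fun _ w => w) = 1) →
        -- individual rationality with probability 1 (payments are nonnegative)
        (∀ c : Fin n → ℝ, (∀ e, 0 ≤ c e) → ∀ x ∈ (M c).support,
          0 ≤ x.2 ∧ (∑ e ∈ x.1, c e) ≤ x.2) →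
        -- truthfulness in expectation
        (∀ cbar c : Fin n → ℝ, (∀ e, 0 ≤ cbar e) → (∀ e, 0 ≤ c e) →
          fexp (M c) (fun x => x.2 - ∑ e ∈ x.1, cbar e) ≤
            fexp (M cbar) (fun x => x.2 - ∑ e ∈ x.1, cbar e)) →
        -- budget feasibility in expectation
        (∀ c : Fin n → ℝ, (∀ e, 0 ≤ c e) → fexp (M c) (fun x => x.2) ≤ B) →
        ∃ c : Fin n → ℝ, (∀ e, 0 ≤ c e) ∧
          fexp (M c) (fun x => ∑ e ∈ x.1, v e) ≤ OPTalg v c B * (1 + ε) / n := by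
  have hnpos : (0:ℝ) < n := by exact_mod_cast Nat.lt_of_lt_of_le Nat.zero_lt_one hn
  set γ : ℝ := 1 + n / ε with hγdef
  have hγ1 : 1 < γ := by
    have : 0 < (n:ℝ) / ε := div_pos hnpos hε
    rw [hγdef]; linarith
  have hγpos : 0 < γ := by linarith
  set v : Fin n → ℝ := fun e => γ ^ (n - 1 - (e : ℕ)) with hvdef
  have hvpos : ∀ e, 0 < v e := fun e => pow_pos hγpos _
  refine ⟨γ, v, 1, rfl, fun e => rfl, rfl, ?_⟩
  intro M hprob hIR htruth hbudget
  set cv : Fin n → Fin n → ℝ := fun k e => v e / v k with hcv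
  have hcnn : ∀ k e, 0 ≤ cv k e := fun k e => le_of_lt (div_pos (hvpos e) (hvpos k))
  have hvstep : ∀ (j : ℕ) (h : j + 1 < n),
      v ⟨j, Nat.lt_of_succ_lt h⟩ = γ * v ⟨j+1, h⟩ := by
    intro j h
    show γ ^ (n - 1 - j) = γ * γ ^ (n - 1 - (j+1))
    rw [← pow_succ']
    congr 1
    omega
  -- the sequences
  set t : ℕ → ℝ := fun j =>
    if h : j < n then fexp (M (cv ⟨j, h⟩)) (fun x => ∑ e ∈ x.1, cv ⟨j, h⟩ e) else 0 with htdef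
  set p : ℕ → ℝ := fun j =>
    if h : j < n then fexp (M (cv ⟨j, h⟩)) (fun x => x.2) else 0 with hpdef
  have htp : ∀ j, j < n → t j ≤ p j := by
    intro j h
    simp only [htdef, hpdef, dif_pos h]
    exact fexp_mono _ _ _ (hprob _ (hcnn _)).1 (fun x hx => (hIR _ (hcnn _) x hx).2)
  have hp1 : ∀ j, j < n → p j ≤ 1 := by
    intro j h
    simp only [hpdef, dif_pos h]
    exact hbudget _ (hcnn _)
  have hstep : ∀ j, j + 1 < n → p (j+1) - γ⁻¹ * t (j+1) ≤ p j - t j := by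
    intro j h
    have h' : j < n := Nat.lt_of_succ_lt h
    simp only [htdef, hpdef, dif_pos h, dif_pos h']
    have key := htruth (cv ⟨j, h'⟩) (cv ⟨j+1, h⟩) (hcnn _) (hcnn _)
    rw [fexp_util, fexp_util] at key
    have heq : (fun x : Finset (Fin n) × ℝ => ∑ e ∈ x.1, cv ⟨j, h'⟩ e)
        = (fun x : Finset (Fin n) × ℝ => ∑ e ∈ x.1, γ⁻¹ * cv ⟨j+1, h⟩ e) := by
      funext x
      refine Finset.sum_congr rfl fun e _ => ?_
      show v e / v ⟨j, h'⟩ = γ⁻¹ * (v e / v ⟨j+1, h⟩)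
      rw [hvstep j h, div_mul_eq_div_div_swap, div_eq_mul_inv, mul_comm]
    rw [show fexp (M (cv ⟨j+1, h⟩)) (fun x => ∑ e ∈ x.1, cv ⟨j, h'⟩ e)
        = γ⁻¹ * fexp (M (cv ⟨j+1, h⟩)) (fun x => ∑ e ∈ x.1, cv ⟨j+1, h⟩ e) from by
      rw [heq, fexp_mul_sum]] at key
    exact key
  obtain ⟨j, hjn, hjτ⟩ := chain_lemma ε hε n hn γ hγdef t p htp hp1 hstep
  refine ⟨cv ⟨j, hjn⟩, hcnn _, ?_⟩
  set k : Fin n := ⟨j, hjn⟩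
  have hvk := hvpos k
  -- OPTalg = v k
  have hub : ∀ x ∈ {x : ℝ | ∃ S : Finset (Fin n), (∑ e ∈ S, cv k e) ≤ 1 ∧ x = ∑ e ∈ S, v e},
      x ≤ v k := by
    rintro x ⟨S, hS, rfl⟩
    have h1 : ∑ e ∈ S, v e = v k * ∑ e ∈ S, cv k e := by
      rw [Finset.mul_sum]
      refine Finset.sum_congr rfl fun e _ => ?_
      show v e = v k * (v e / v k)
      field_simp
    rw [h1]
    calc v k * ∑ e ∈ S, cv k e ≤ v k * 1 := by
          exact mul_le_mul_of_nonneg_left hS hvk.le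
      _ = v k := mul_one _
  have hmem : v k ∈ {x : ℝ | ∃ S : Finset (Fin n), (∑ e ∈ S, cv k e) ≤ 1 ∧ x = ∑ e ∈ S, v e} := by
    refine ⟨{k}, ?_, by simp⟩
    simp only [Finset.sum_singleton]
    show v k / v k ≤ 1
    rw [div_self hvk.ne']
  have hOPT : OPTalg v (cv k) 1 = v k := by
    unfold OPTalg
    exact le_antisymm (csSup_le ⟨_, hmem⟩ hub) (le_csSup ⟨v k, hub⟩ hmem)
  rw [hOPT]
  -- fexp value = v k * t j
  have hval : fexp (M (cv k)) (fun x => ∑ e ∈ x.1, v e) = v k * t j := by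
    have heq : (fun x : Finset (Fin n) × ℝ => ∑ e ∈ x.1, v e)
        = (fun x : Finset (Fin n) × ℝ => ∑ e ∈ x.1, v k * cv k e) := by
      funext x
      refine Finset.sum_congr rfl fun e _ => ?_
      show v e = v k * (v e / v k)
      field_simp
    rw [heq, fexp_mul_sum]
    simp only [htdef, dif_pos hjn]
    rfl
  rw [hval, mul_div_assoc]
  exact mul_le_mul_of_nonneg_left hjτ hvk.le
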